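/- In the setting of the inexact forward–backward quasi-monotonicity theorem (X normed, M self-adjoint positive semi-definite, iterates x^k with v^{k+1} := −M(x^{k+1} − x^k), gap 𝒢 built from F, G, Ξ, set Ω ∋ x^0, constants η > 0, Λ̆ ≤ 2(1−η)M, errors ε_k with r := sup_N Σ_{k<N} ε_k < ∞, the descent inequality ⟨v^{k+1}, x^{k+1} − x^k⟩ ≥ 𝒢(x^{k+1}; x^k) − (1/2)‖x^{k+1} − x^k‖_{Λ̆}² − ε_k whenever x^0,…,x^k ∈ Ω, and the implication Σ_{k<N} 𝒢(x^{k+1}; x^k) ≤ r ⟹ x^N ∈ Ω), assume additionally: (iv) there is η̃ ∈ [0, η) with inf_{N∈ℕ} Σ_{k=0}^{N−1} ( 𝒢(x^{k+1}; x^k) + η̃ ‖x^{k+1} − x^k‖_M² ) > −∞; F is Fréchet differentiable with derivative F′ : X → X*, and H(x) := { F′(x) + q + Ξx : q ∈ ∂G(x) } ⊆ X*; and whenever sup_N Σ_{k<N} ‖x^{k+1} − x^k‖_M² < ∞, one has inf_{x* ∈ H(x^{k+1})} ‖x* − v^{k+1}‖_{X*} → 0 as k → ∞. Then sup_N Σ_{k<N}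 ‖x^{k+1} − x^k‖_M² < ∞, ‖v^{k+1}‖_{X*} → 0, and inf_{x* ∈ H(x^{k+1})} ‖x*‖_{X*} → 0 as k → ∞. -/

import Mathlib

open Filter
open scoped ENNReal

lemma coeSumE (f : ℕ → ℝ) (N : ℕ) :
    ((∑ k ∈ Finset.range N, f k : ℝ) : EReal) = ∑ k ∈ Finset.range N, ((f k : EReal)) := by
  induction N with
  | zero => simp
  | succ n ih => simp [Finset.sum_range_succ, EReal.coe_add, ih]

lemma csPSD {X : Type*} [NormedAddCommGroup X] [NormedSpace ℝ X]
    (M : X →L[ℝ] StrongDual ℝ X)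
    (hMsa : ∀ u v : X, M u v = M v u) (hMpsd : ∀ u : X, 0 ≤ M u u)
    (u v : X) : (M u v) ^ 2 ≤ M u u * M v v := by
  have h : ∀ t : ℝ, 0 ≤ (M v v) * (t * t) + (2 * M u v) * t + M u u := by
    intro t
    have := hMpsd (u + t • v)
    have e : M (u + t • v) (u + t • v)
        = (M v v) * (t * t) + (2 * M u v) * t + M u u := by
      simp only [map_add, map_smul, ContinuousLinearMap.add_apply,
        ContinuousLinearMap.smul_apply, smul_eq_mul]
      rw [hMsa v u]
      ring
    linarith [e ▸ this]
  have hd := discrim_le_zero h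
  simp only [discrim] at hd
  nlinarith

lemma normPSD {X : Type*} [NormedAddCommGroup X] [NormedSpace ℝ X]
    (M : X →L[ℝ] StrongDual ℝ X)
    (hMsa : ∀ u v : X, M u v = M v u) (hMpsd : ∀ u : X, 0 ≤ M u u)
    (u : X) : ‖M u‖ ≤ Real.sqrt (‖M‖ * M u u) := by
  apply ContinuousLinearMap.opNorm_le_bound _ (Real.sqrt_nonneg _)
  intro v
  have hcs := csPSD M hMsa hMpsd u v
  have hvv : M v v ≤ ‖M‖ * ‖v‖ ^ 2 := by
    calc M v v ≤ ‖M v‖ * ‖v‖ := by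
          calc M v v ≤ |M v v| := le_abs_self _
          _ = ‖M v v‖ := rfl
          _ ≤ ‖M v‖ * ‖v‖ := (M v).le_opNorm v
    _ ≤ (‖M‖ * ‖v‖) * ‖v‖ := by
          have := M.le_opNorm v
          have := norm_nonneg v
          nlinarith
    _ = ‖M‖ * ‖v‖ ^ 2 := by ring
  have h2 : (M u v) ^ 2 ≤ (‖M‖ * M u u) * ‖v‖ ^ 2 := by
    nlinarith [hMpsd u]
  have : |M u v| ≤ Real.sqrt (‖M‖ * M u u) * ‖v‖ := by
    have := Real.sqrt_le_sqrt h2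
    rw [Real.sqrt_sq_eq_abs] at this
    calc |M u v| ≤ Real.sqrt ((‖M‖ * M u u) * ‖v‖ ^ 2) := this
    _ = Real.sqrt (‖M‖ * M u u) * Real.sqrt (‖v‖ ^ 2) := by
          rw [Real.sqrt_mul (mul_nonneg (norm_nonneg M) (hMpsd u))]
    _ = Real.sqrt (‖M‖ * M u u) * ‖v‖ := by
          rw [Real.sqrt_sq (norm_nonneg v)]
  simpa using this

theorem stmt13 {X : Type*} [NormedAddCommGroup X] [NormedSpace ℝ X]
    (M : X →L[ℝ] StrongDual ℝ X)
    (hMsa : ∀ u v : X, M u v = M v u) (hMpsd : ∀ u : X, 0 ≤ M u u)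
    (x : ℕ → X)
    (F : X → ℝ) (G : X → EReal)
    (hGproper : (∃ u, G u ≠ ⊤) ∧ ∀ u, G u ≠ ⊥)
    (Ξ : X →L[ℝ] StrongDual ℝ X)
    (hΞskew : ∀ u v : X, Ξ u v = -(Ξ v u))
    (gap : X → X → EReal)
    (hgap : ∀ u v : X,
      gap u v = ((F u : EReal) + G u) - ((F v : EReal) + G v) - ((Ξ u v : ℝ) : EReal))
    (Ω : Set X) (hx0 : x 0 ∈ Ω)
    (η : ℝ) (hη : 0 < η)
    (Λb : X →L[ℝ] StrongDual ℝ X)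
    (hΛbsa : ∀ u v : X, Λb u v = Λb v u)
    (hΛbM : ∀ u : X, Λb u u ≤ 2 * (1 - η) * M u u)
    (ε : ℕ → ℝ) (r : ℝ)
    (hr : ∀ N : ℕ, ∑ k ∈ Finset.range N, ε k ≤ r)
    (hdesc : ∀ k : ℕ, (∀ n ≤ k, x n ∈ Ω) →
      gap (x (k + 1)) (x k)
          - (((1 / 2) * Λb (x (k + 1) - x k) (x (k + 1) - x k) : ℝ) : EReal)
          - ((ε k : ℝ) : EReal)
        ≤ (((-(M (x (k + 1) - x k))) (x (k + 1) - x k) : ℝ) : EReal))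
    (hΩimp : ∀ N : ℕ, 1 ≤ N →
      (∑ k ∈ Finset.range N, gap (x (k + 1)) (x k)) ≤ (r : EReal) → x N ∈ Ω)
    -- (iv) lower bound on the gap-plus-step sums
    (ηt : ℝ) (hηt0 : 0 ≤ ηt) (hηtη : ηt < η) (L : ℝ)
    (hlb : ∀ N : ℕ, (L : EReal) ≤
      ∑ k ∈ Finset.range N,
        (gap (x (k + 1)) (x k)
          + ((ηt * M (x (k + 1) - x k) (x (k + 1) - x k) : ℝ) : EReal)))
    -- F Fréchet differentiable, H(x) = F'(x) + ∂G(x) + Ξx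
    (F' : X → StrongDual ℝ X) (hF' : ∀ u : X, HasFDerivAt F (F' u) u)
    (H : X → Set (StrongDual ℝ X))
    (hH : ∀ u : X, H u = {xs | ∃ q : StrongDual ℝ X,
      (∀ w : X, G u + ((q (w - u) : ℝ) : EReal) ≤ G w) ∧ xs = F' u + q + Ξ u})
    -- approximate continuity
    (happrox : (∃ C : ℝ, ∀ N : ℕ,
        ∑ k ∈ Finset.range N, M (x (k + 1) - x k) (x (k + 1) - x k) ≤ C) →
      Tendsto (fun k : ℕ =>
          ⨅ xs ∈ H (x (k + 1)), (‖xs - (-(M (x (k + 1) - x k)))‖₊ : ℝ≥0∞))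
        atTop (nhds 0)) :
    (∃ C : ℝ, ∀ N : ℕ,
        ∑ k ∈ Finset.range N, M (x (k + 1) - x k) (x (k + 1) - x k) ≤ C)
    ∧ Tendsto (fun k : ℕ => ‖-(M (x (k + 1) - x k))‖) atTop (nhds 0)
    ∧ Tendsto (fun k : ℕ => ⨅ xs ∈ H (x (k + 1)), (‖xs‖₊ : ℝ≥0∞))
        atTop (nhds 0) := by
  set m : ℕ → ℝ := fun k => M (x (k + 1) - x k) (x (k + 1) - x k) with hm
  -- Step A: the key per-step inequality under Ω-membership
  have hA : ∀ k : ℕ, (∀ n ≤ k, x n ∈ Ω) →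
      gap (x (k + 1)) (x k) ≤ ((ε k - η * m k : ℝ) : EReal) := by
    intro k hk
    have h := hdesc k hk
    have hneg : ((-(M (x (k + 1) - x k))) (x (k + 1) - x k) : ℝ) = -(m k) := by
      simp [hm]
    rw [hneg] at h
    set c₁ : ℝ := (1 / 2) * Λb (x (k + 1) - x k) (x (k + 1) - x k) with hc₁
    have h2 : gap (x (k + 1)) (x k) - (c₁ : EReal) ≤ ((-(m k) : ℝ) : EReal) + (ε k : EReal) :=
      (EReal.sub_le_iff_le_add (Or.inl (EReal.coe_ne_bot _)) (Or.inl (EReal.coe_ne_top _))).1 h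
    have h3 : gap (x (k + 1)) (x k) ≤ (((-(m k) : ℝ) : EReal) + (ε k : EReal)) + (c₁ : EReal) :=
      (EReal.sub_le_iff_le_add (Or.inl (EReal.coe_ne_bot _)) (Or.inl (EReal.coe_ne_top _))).1 h2
    have h4 : (((-(m k) : ℝ) : EReal) + (ε k : EReal)) + (c₁ : EReal)
        = ((-(m k) + ε k + c₁ : ℝ) : EReal) := by
      norm_cast
    rw [h4] at h3
    refine le_trans h3 (EReal.coe_le_coe_iff.2 ?_)
    have hΛ : c₁ ≤ (1 - η) * m k := by
      have := hΛbM (x (k + 1) - x k)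
      rw [hc₁, hm]
      linarith
    linarith
  -- Step B: all iterates stay in Ω
  have hΩall : ∀ N : ℕ, ∀ n ≤ N, x n ∈ Ω := by
    intro N
    induction N with
    | zero => intro n hn; simpa [Nat.le_zero.mp hn] using hx0
    | succ N ih =>
      intro n hn
      rcases Nat.lt_succ_iff_lt_or_eq.mp (Nat.lt_succ_of_le hn) with h | h
      · exact ih n (Nat.lt_succ_iff.mp h)
      · subst h
        apply hΩimp (N + 1) (Nat.le_add_left 1 N)
        calc ∑ k ∈ Finset.range (N + 1), gap (x (k + 1)) (x k)
            ≤ ∑ k ∈ Finset.range (N + 1), ((ε k - η * m k : ℝ) : EReal) := by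
              refine Finset.sum_le_sum fun k hk => hA k fun n' hn' => ih n' ?_
              exact le_trans hn' (Nat.lt_succ_iff.mp (Finset.mem_range.mp hk))
          _ = ((∑ k ∈ Finset.range (N + 1), (ε k - η * m k) : ℝ) : EReal) :=
              (coeSumE _ _).symm
          _ ≤ (r : EReal) := by
              apply EReal.coe_le_coe_iff.2
              have h1 : ∑ k ∈ Finset.range (N + 1), (ε k - η * m k)
                  ≤ ∑ k ∈ Finset.range (N + 1), ε k := by
                refine Finset.sum_le_sum fun k _ => ?_
                have := hMpsd (x (k + 1) - x k)
                have : 0 ≤ m k := this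
                nlinarith
              exact le_trans h1 (hr (N + 1))
  have hC : ∀ k : ℕ, gap (x (k + 1)) (x k) ≤ ((ε k - η * m k : ℝ) : EReal) :=
    fun k => hA k fun n _ => hΩall n n le_rfl
  -- Step D: the step-sums are bounded
  have hD : ∀ N : ℕ, ∑ k ∈ Finset.range N, m k ≤ (r - L) / (η - ηt) := by
    intro N
    have h1 : (L : EReal) ≤
        ((∑ k ∈ Finset.range N, (ε k - η * m k + ηt * m k) : ℝ) : EReal) := by
      refine le_trans (hlb N) ?_
      rw [coeSumE]
      refine Finset.sum_le_sum fun k _ => ?_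
      calc gap (x (k + 1)) (x k) + ((ηt * m k : ℝ) : EReal)
          ≤ ((ε k - η * m k : ℝ) : EReal) + ((ηt * m k : ℝ) : EReal) :=
            add_le_add_left (hC k) _
        _ = ((ε k - η * m k + ηt * m k : ℝ) : EReal) := by norm_cast
    have h2 : L ≤ ∑ k ∈ Finset.range N, (ε k - η * m k + ηt * m k) :=
      EReal.coe_le_coe_iff.1 h1
    have h3 : ∑ k ∈ Finset.range N, (ε k - η * m k + ηt * m k)
        = (∑ k ∈ Finset.range N, ε k) - (η - ηt) * ∑ k ∈ Finset.range N, m k := by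
      rw [Finset.mul_sum, ← Finset.sum_sub_distrib]
      exact Finset.sum_congr rfl fun k _ => by ring
    have h4 : (η - ηt) * ∑ k ∈ Finset.range N, m k ≤ r - L := by
      have := hr N
      rw [h3] at h2
      linarith
    have hpos : 0 < η - ηt := by linarith
    rw [le_div_iff₀ hpos]
    nlinarith [h4]
  -- conclusion 2
  have hmnn : ∀ k, 0 ≤ m k := fun k => hMpsd _
  have hsummable : Summable m := summable_of_sum_range_le hmnn hD
  have htend0 : Tendsto m atTop (nhds 0) := hsummable.tendsto_atTop_zero
  have ht2 : Tendsto (fun k : ℕ => ‖-(M (x (k + 1) - x k))‖) atTop (nhds 0) := by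
    have hub : ∀ k : ℕ, ‖-(M (x (k + 1) - x k))‖ ≤ Real.sqrt (‖M‖ * m k) := by
      intro k
      rw [norm_neg]
      exact normPSD M hMsa hMpsd _
    have hup : Tendsto (fun k : ℕ => Real.sqrt (‖M‖ * m k)) atTop (nhds 0) := by
      have : Tendsto (fun k : ℕ => ‖M‖ * m k) atTop (nhds (‖M‖ * 0)) :=
        tendsto_const_nhds.mul htend0
      rw [mul_zero] at this
      simpa using this.sqrt
    exact squeeze_zero (fun k => norm_nonneg _) hub hup
  refine ⟨⟨(r - L) / (η - ηt), hD⟩, ht2, ?_⟩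
  -- conclusion 3
  have hap := happrox ⟨(r - L) / (η - ηt), hD⟩
  have hb : Tendsto (fun k : ℕ => (‖-(M (x (k + 1) - x k))‖₊ : ℝ≥0∞)) atTop (nhds 0) := by
    have h' : Tendsto (fun k : ℕ => ‖-(M (x (k + 1) - x k))‖₊) atTop (nhds (0 : NNReal)) := by
      rw [← NNReal.tendsto_coe]
      exact (by simpa only [coe_nnnorm, NNReal.coe_zero] using ht2)
    simpa using ENNReal.tendsto_coe.2 h'
  have hle : ∀ k : ℕ, (⨅ xs ∈ H (x (k + 1)), (‖xs‖₊ : ℝ≥0∞))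
      ≤ (⨅ xs ∈ H (x (k + 1)), (‖xs - (-(M (x (k + 1) - x k)))‖₊ : ℝ≥0∞))
        + (‖-(M (x (k + 1) - x k))‖₊ : ℝ≥0∞) := by
    intro k
    calc (⨅ xs ∈ H (x (k + 1)), (‖xs‖₊ : ℝ≥0∞))
        ≤ ⨅ xs ∈ H (x (k + 1)),
            ((‖xs - (-(M (x (k + 1) - x k)))‖₊ : ℝ≥0∞) + (‖-(M (x (k + 1) - x k))‖₊ : ℝ≥0∞)) := by
          refine iInf₂_mono fun xs _ => ?_
          have h := nnnorm_add_le (xs - (-(M (x (k + 1) - x k)))) (-(M (x (k + 1) - x k)))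
          rw [sub_add_cancel] at h
          exact_mod_cast h
      _ = (⨅ xs ∈ H (x (k + 1)), (‖xs - (-(M (x (k + 1) - x k)))‖₊ : ℝ≥0∞))
            + (‖-(M (x (k + 1) - x k))‖₊ : ℝ≥0∞) := by
          simp_rw [ENNReal.iInf_add]
  have hsum : Tendsto (fun k : ℕ =>
      (⨅ xs ∈ H (x (k + 1)), (‖xs - (-(M (x (k + 1) - x k)))‖₊ : ℝ≥0∞))
        + (‖-(M (x (k + 1) - x k))‖₊ : ℝ≥0∞)) atTop (nhds 0) := by
    have := hap.add hb
    simpa using this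
  exact tendsto_of_tendsto_of_tendsto_of_le_of_le tendsto_const_nhds hsum
    (fun k => zero_le') hle
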